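/- Let r be a rank tuple and 1 ≤ i ≤ K−2. If r_i ≥ 1, r_{i+1} ≤ n−1, and r_i ≤ r_{i+1} + 1, then 𝒞(r_1, …, r_i − 1, r_{i+1} + 1, …, r_{K−1}) ⊆ 𝒞(r_1, …, r_{K−1}). Symmetrically, if r_{i+1} ≥ 1, r_i ≤ n−1, and r_{i+1} ≤ r_i + 1, then 𝒞(r_1, …, r_i + 1, r_{i+1} − 1, …, r_{K−1}) ⊆ 𝒞(r_1, …, r_{K−1}). -/

import Mathlib

open Matrix


def IsSymProj (n : ℕ) (P : Matrix (Fin n) (Fin n) ℝ) : Prop :=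
  P * P = P ∧ Pᵀ = P


noncomputable def Aker (n K : ℕ) (P : Fin (K-1) → Matrix (Fin n) (Fin n) ℝ)
    (H : Matrix (Fin n) (Fin n) ℝ) : Fin K → Matrix (Fin n) (Fin n) ℝ :=
  fun j => ∑ δ ∈ Finset.univ.filter
      (fun δ : Fin (K-1) → Bool => (∑ i, (if δ i then 1 else 0)) = (j : ℕ)),
    H * ((List.finRange (K-1)).map
      (fun i => if δ i then (1 : Matrix (Fin n) (Fin n) ℝ) - P i else P i)).prod

def SOCK (n K : ℕ) (r : Fin (K-1) → ℕ) : Set (Fin K → Matrix (Fin n) (Fin n) ℝ) :=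
  {A | ∃ P H, (∀ i, IsSymProj n (P i) ∧ (P i).rank = r i) ∧
    Hᵀ * H = 1 ∧ H.det = 1 ∧ A = Aker n K P H}

variable {n : ℕ}

local notation "M" => Matrix (Fin n) (Fin n) ℝ

lemma mul_vecMulVec' (A : M) (u v : Fin n → ℝ) :
    A * vecMulVec u v = vecMulVec (A.mulVec u) v := by
  ext i j
  simp [mul_apply, vecMulVec_apply, mulVec, dotProduct, Finset.sum_mul, mul_assoc]

lemma vecMulVec_mul' (u v : Fin n → ℝ) (A : M) :
    vecMulVec u v * A = vecMulVec u (A.vecMul v) := by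
  ext i j
  simp [mul_apply, vecMulVec_apply, vecMul, dotProduct, Finset.mul_sum, mul_assoc]

lemma vecMulVec_mul_vecMulVec' (u v x y : Fin n → ℝ) :
    vecMulVec u v * vecMulVec x y = (v ⬝ᵥ x) • vecMulVec u y := by
  ext i j
  simp [mul_apply, vecMulVec_apply, dotProduct, Finset.sum_mul, Finset.mul_sum]
  rw [Finset.sum_congr rfl]
  intro k _
  ring

lemma vecMulVec_mulVec (w x : Fin n → ℝ) :
    (vecMulVec w w).mulVec x = (w ⬝ᵥ x) • w := by
  ext i
  simp [vecMulVec_apply, mulVec, dotProduct, Finset.sum_mul]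
  rw [Finset.sum_congr rfl]
  intro k _
  ring

lemma rank_proj_add (R : M) (hR : R * R = R) (hRT : Rᵀ = R) (w : Fin n → ℝ)
    (hw : R.mulVec w = 0) (hww : w ⬝ᵥ w = 1) :
    (R + vecMulVec w w).rank = R.rank + 1 := by
  have hw0 : w ≠ 0 := by rintro rfl; simp at hww
  have hfix : ∀ x, R.mulVec (R.mulVec x) = R.mulVec x := by
    intro x; rw [mulVec_mulVec, hR]
  have hdotR : ∀ x, w ⬝ᵥ R.mulVec x = 0 := by
    intro x
    rw [dotProduct_mulVec]
    have h0 : w ᵥ* R = 0 := by rw [← hRT, vecMul_transpose, hw]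
    rw [h0, zero_dotProduct]
  have hrange : LinearMap.range (R + vecMulVec w w).mulVecLin
      = LinearMap.range R.mulVecLin ⊔ (ℝ ∙ w) := by
    apply le_antisymm
    · rintro y ⟨x, rfl⟩
      rw [mulVecLin_apply, add_mulVec, vecMulVec_mulVec]
      exact Submodule.add_mem _ (Submodule.mem_sup_left ⟨x, rfl⟩)
        (Submodule.mem_sup_right (Submodule.smul_mem _ _ (Submodule.mem_span_singleton_self w)))
    · rw [sup_le_iff]
      constructor
      · rintro y ⟨x, rfl⟩
        refine ⟨R.mulVec x, ?_⟩
        rw [mulVecLin_apply, mulVecLin_apply, add_mulVec, vecMulVec_mulVec, hdotR, zero_smul,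
          add_zero, hfix]
      · rw [Submodule.span_singleton_le_iff_mem]
        refine ⟨w, ?_⟩
        rw [mulVecLin_apply, add_mulVec, hw, vecMulVec_mulVec, hww, one_smul, zero_add]
  have hinf : LinearMap.range R.mulVecLin ⊓ (ℝ ∙ w) = ⊥ := by
    rw [eq_bot_iff]
    rintro y ⟨hy1, hy2⟩
    obtain ⟨c, rfl⟩ := Submodule.mem_span_singleton.mp hy2
    obtain ⟨x, hx⟩ := hy1
    rw [mulVecLin_apply] at hx
    have h1 : R.mulVec (c • w) = 0 := by rw [mulVec_smul, hw, smul_zero]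
    have h2 : R.mulVec (c • w) = c • w := by rw [← hx, hfix, hx]
    rw [h2] at h1
    simp [h1]
  have hkey := Submodule.finrank_sup_add_finrank_inf_eq
    (LinearMap.range R.mulVecLin) (ℝ ∙ w)
  rw [hinf, finrank_bot, add_zero, finrank_span_singleton hw0] at hkey
  simp only [Matrix.rank]
  rw [hrange, hkey]

lemma exists_unit_vec (P Q : M) (hP : P * P = P) (hPT : Pᵀ = P)
    (hQ : Q * Q = Q) (h : P.rank < Q.rank) :
    ∃ w : Fin n → ℝ, P.mulVec w = 0 ∧ Q.mulVec w = w ∧ w ⬝ᵥ w = 1 := by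
  have hrn : P.rank + Module.finrank ℝ (LinearMap.ker P.mulVecLin) = n := by
    have := LinearMap.finrank_range_add_finrank_ker (P.mulVecLin)
    rwa [Module.finrank_fintype_fun_eq_card, Fintype.card_fin] at this
  set s := LinearMap.range Q.mulVecLin
  set t := LinearMap.ker P.mulVecLin
  have hsup : Module.finrank ℝ (s ⊔ t : Submodule ℝ (Fin n → ℝ)) ≤ n := by
    have := Submodule.finrank_le (s ⊔ t : Submodule ℝ (Fin n → ℝ))
    rwa [Module.finrank_fintype_fun_eq_card, Fintype.card_fin] at this
  have hkey := Submodule.finrank_sup_add_finrank_inf_eq s t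
  have hpos : 0 < Module.finrank ℝ (s ⊓ t : Submodule ℝ (Fin n → ℝ)) := by
    have hs : Module.finrank ℝ s = Q.rank := rfl
    omega
  have : Nontrivial (s ⊓ t : Submodule ℝ (Fin n → ℝ)) := (Module.finrank_pos_iff (R := ℝ)).mp hpos
  obtain ⟨⟨v, hv⟩, hv0⟩ := exists_ne (0 : (s ⊓ t : Submodule ℝ (Fin n → ℝ)))
  have hvne : v ≠ 0 := by
    intro h0
    apply hv0
    ext
    simp [h0]
  obtain ⟨hv1, hv2⟩ := hv
  have hQv : Q.mulVec v = v := by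
    obtain ⟨x, hx⟩ := hv1
    rw [mulVecLin_apply] at hx
    rw [← hx, mulVec_mulVec, hQ]
  have hPv : P.mulVec v = 0 := hv2
  have hd : 0 < v ⬝ᵥ v := by
    have hnn : 0 ≤ v ⬝ᵥ v := Finset.sum_nonneg fun i _ => mul_self_nonneg _
    rcases hnn.lt_or_eq with h' | h'
    · exact h'
    · exact absurd ((dotProduct_self_eq_zero).mp h'.symm) hvne
  refine ⟨(Real.sqrt (v ⬝ᵥ v))⁻¹ • v, ?_, ?_, ?_⟩
  · rw [mulVec_smul, hPv, smul_zero]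
  · rw [mulVec_smul, hQv]
  · rw [smul_dotProduct, dotProduct_smul]
    have hs0 : Real.sqrt (v ⬝ᵥ v) ≠ 0 := by positivity
    rw [smul_eq_mul, smul_eq_mul, ← mul_assoc, ← mul_inv]
    rw [← Real.sqrt_mul_self hd.le]
    field_simp
    rw [Real.sq_sqrt (Real.sqrt_nonneg _)]

lemma transfer (P Q : M) (hP : IsSymProj n P) (hQ : IsSymProj n Q)
    (h : P.rank < Q.rank) :
    ∃ P' Q' : M, IsSymProj n P' ∧ IsSymProj n Q' ∧
      P'.rank = P.rank + 1 ∧ Q'.rank + 1 = Q.rank ∧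
      P' * Q' = P * Q ∧ Q' * P' = Q * P ∧ P' + Q' = P + Q := by
  obtain ⟨hP1, hP2⟩ := hP
  obtain ⟨hQ1, hQ2⟩ := hQ
  obtain ⟨w, hPw, hQw, hww⟩ := exists_unit_vec P Q hP1 hP2 hQ1 h
  set V : M := vecMulVec w w with hV
  have hVT : Vᵀ = V := by
    ext i j; simp [hV, vecMulVec_apply, mul_comm]
  have hPV : P * V = 0 := by
    rw [hV, mul_vecMulVec', hPw]
    ext i j; simp [vecMulVec_apply]
  have hVP : V * P = 0 := by
    rw [hV, vecMulVec_mul']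
    have : w ᵥ* P = 0 := by rw [← hP2, vecMul_transpose, hPw]
    rw [this]
    ext i j; simp [vecMulVec_apply]
  have hQV : Q * V = V := by rw [hV, mul_vecMulVec', hQw]
  have hVQ : V * Q = V := by
    rw [hV, vecMulVec_mul']
    have : w ᵥ* Q = w := by rw [← hQ2, vecMul_transpose, hQw]
    rw [this]
  have hVV : V * V = V := by rw [hV, vecMulVec_mul_vecMulVec', hww, one_smul]
  have hQVw : (Q - V).mulVec w = 0 := by
    rw [sub_mulVec, hQw, vecMulVec_mulVec, hww, one_smul, sub_self]
  have hQVproj : (Q - V) * (Q - V) = Q - V := by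
    rw [sub_mul, mul_sub, mul_sub, hQ1, hQV, hVQ, hVV]
    abel
  refine ⟨P + V, Q - V, ⟨?_, ?_⟩, ⟨hQVproj, ?_⟩, ?_, ?_, ?_, ?_, ?_⟩
  · rw [add_mul, mul_add, mul_add, hP1, hPV, hVP, hVV]
    abel
  · rw [transpose_add, hP2, hVT]
  · rw [transpose_sub, hQ2, hVT]
  · exact rank_proj_add P hP1 hP2 w hPw hww
  · have := rank_proj_add (Q - V) hQVproj (by rw [transpose_sub, hQ2, hVT]) w hQVw hww
    rw [sub_add_cancel] at this
    omega
  · rw [add_mul, mul_sub, mul_sub, hPV, hVQ, hVV]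
    abel
  · rw [sub_mul, mul_add, mul_add, hQV, hVP, hVV]
    abel
  · abel

lemma prod_split {m : ℕ} (g : Fin m → M) (i : Fin m) (h : (i:ℕ) + 1 < m) :
    ((List.finRange m).map g).prod =
      (((List.finRange m).take (i:ℕ)).map g).prod *
        (g i * (g ⟨(i:ℕ)+1, h⟩ *
          (((List.finRange m).drop ((i:ℕ)+2)).map g).prod)) := by
  have h1 : (i:ℕ) < (List.finRange m).length := by simp [i.isLt]
  have h2 : (i:ℕ) + 1 < (List.finRange m).length := by simpa using h
  conv_lhs => rw [← List.take_append_drop (i:ℕ) (List.finRange m),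
    List.drop_eq_getElem_cons h1, List.drop_eq_getElem_cons h2]
  rw [List.map_append, List.prod_append, List.map_cons, List.map_cons, List.prod_cons,
    List.prod_cons]
  congr 2
  · simp
  · congr 1
    simp

lemma mem_take_ne {m : ℕ} (i j : Fin m) (hij : (i:ℕ) + 1 = (j:ℕ)) (k : Fin m)
    (hk : k ∈ (List.finRange m).take (i:ℕ)) : k ≠ i ∧ k ≠ j := by
  obtain ⟨idx, hidx, hget⟩ := List.mem_iff_getElem.mp hk
  have hidx' : idx < (i:ℕ) := by
    simpa using hidx
  rw [List.getElem_take] at hget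
  have : (k:ℕ) = idx := by
    rw [← hget]; simp
  constructor <;> (intro hc; subst hc; omega)

lemma mem_drop_ne {m : ℕ} (i j : Fin m) (hij : (i:ℕ) + 1 = (j:ℕ)) (k : Fin m)
    (hk : k ∈ (List.finRange m).drop ((i:ℕ)+2)) : k ≠ i ∧ k ≠ j := by
  obtain ⟨idx, hidx, hget⟩ := List.mem_iff_getElem.mp hk
  rw [List.getElem_drop] at hget
  have : (k:ℕ) = (i:ℕ) + 2 + idx := by
    rw [← hget]; simp
  constructor <;> (intro hc; subst hc; omega)

lemma pair_sum (Hh A B U W : M) (a b : Bool) :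
    Hh * (A * ((if a then 1-U else U) * ((if b then 1-W else W) * B))) +
      Hh * (A * ((if b then 1-U else U) * ((if a then 1-W else W) * B))) =
    Hh * (A * ((if a = b then
        (if a then ((1:M) + U*W - (U+W)) + (1 + U*W - (U+W)) else U*W + U*W)
      else (U+W) - U*W - U*W) * B)) := by
  cases a <;> cases b <;>
    simp only [if_true, if_false, Bool.false_eq_true, Bool.true_eq_false, reduceIte] <;>
    noncomm_ring

lemma Aker_update (K : ℕ) (P : Fin (K-1) → M) (H : M)
    (i j : Fin (K-1)) (hij : (i:ℕ) + 1 = (j:ℕ))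
    (X Y : M) (hprod : X * Y = P i * P j) (hsum : X + Y = P i + P j) :
    Aker n K (Function.update (Function.update P i X) j Y) H = Aker n K P H := by
  have hne : i ≠ j := by
    intro h; rw [h] at hij; omega
  have hlt : (i:ℕ) + 1 < K - 1 := hij ▸ j.isLt
  have hjeq : (⟨(i:ℕ)+1, hlt⟩ : Fin (K-1)) = j := Fin.ext hij
  set P' : Fin (K-1) → M := Function.update (Function.update P i X) j Y with hP'
  have hP'i : P' i = X := by
    rw [hP', Function.update_of_ne hne, Function.update_self]
  have hP'j : P' j = Y := by
    rw [hP', Function.update_self]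
  have hP'k : ∀ k, k ≠ i → k ≠ j → P' k = P k := by
    intro k hki hkj
    rw [hP', Function.update_of_ne hkj, Function.update_of_ne hki]
  set σ : (Fin (K-1) → Bool) → (Fin (K-1) → Bool) :=
    fun δ => δ ∘ (Equiv.swap i j) with hσ
  have hσi : ∀ δ, σ δ i = δ j := by intro δ; simp [hσ]
  have hσj : ∀ δ, σ δ j = δ i := by intro δ; simp [hσ]
  have hσk : ∀ δ (k : Fin (K-1)), k ≠ i → k ≠ j → σ δ k = δ k := by
    intro δ k hki hkj
    simp [hσ, Equiv.swap_apply_of_ne_of_ne hki hkj]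
  have hσσ : ∀ δ, σ (σ δ) = δ := by
    intro δ; funext k; simp [hσ]
  funext jj
  set fac : (Fin (K-1) → M) → (Fin (K-1) → Bool) → Fin (K-1) → M :=
    fun Q δ k => if δ k then 1 - Q k else Q k with hfac
  set G : (Fin (K-1) → M) → (Fin (K-1) → Bool) → M :=
    fun Q δ => H * ((List.finRange (K-1)).map (fac Q δ)).prod with hG
  set s : Finset (Fin (K-1) → Bool) := Finset.univ.filter
      (fun δ => (∑ k, (if δ k then 1 else 0)) = (jj : ℕ)) with hs
  show ∑ δ ∈ s, G P' δ = ∑ δ ∈ s, G P δ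
  have hcount : ∀ δ : Fin (K-1) → Bool,
      (∑ k, (if σ δ k then 1 else 0) : ℕ) = ∑ k, (if δ k then 1 else 0) := by
    intro δ
    exact Equiv.sum_comp (Equiv.swap i j) (fun k => if δ k then (1:ℕ) else 0)
  have hmem : ∀ δ, δ ∈ s ↔ σ δ ∈ s := by
    intro δ
    rw [hs]
    simp only [Finset.mem_filter, Finset.mem_univ, true_and]
    rw [hcount δ]
  have hresum : ∀ Q : Fin (K-1) → M, ∑ δ ∈ s, G Q (σ δ) = ∑ δ ∈ s, G Q δ := by
    intro Q
    refine Finset.sum_nbij' σ σ (fun δ hδ => (hmem δ).mp hδ)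
      (fun δ hδ => (hmem δ).mp hδ) (fun δ _ => hσσ δ) (fun δ _ => hσσ δ) (fun δ _ => rfl)
  have hpoint : ∀ δ, G P' δ + G P' (σ δ) = G P δ + G P (σ δ) := by
    intro δ
    have htakeEq : ∀ (Q Q' : Fin (K-1) → M) (δ' δ'' : Fin (K-1) → Bool),
        (∀ k, k ≠ i → k ≠ j → Q k = Q' k ∧ δ' k = δ'' k) →
        ((List.finRange (K-1)).take (i:ℕ)).map (fac Q δ') =
          ((List.finRange (K-1)).take (i:ℕ)).map (fac Q' δ'') := by
      intro Q Q' δ' δ'' hagree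
      apply List.map_congr_left
      intro k hk
      obtain ⟨h1, h2⟩ := mem_take_ne i j hij k hk
      obtain ⟨e1, e2⟩ := hagree k h1 h2
      simp [hfac, e1, e2]
    have hdropEq : ∀ (Q Q' : Fin (K-1) → M) (δ' δ'' : Fin (K-1) → Bool),
        (∀ k, k ≠ i → k ≠ j → Q k = Q' k ∧ δ' k = δ'' k) →
        ((List.finRange (K-1)).drop ((i:ℕ)+2)).map (fac Q δ') =
          ((List.finRange (K-1)).drop ((i:ℕ)+2)).map (fac Q' δ'') := by
      intro Q Q' δ' δ'' hagree
      apply List.map_congr_left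
      intro k hk
      obtain ⟨h1, h2⟩ := mem_drop_ne i j hij k hk
      obtain ⟨e1, e2⟩ := hagree k h1 h2
      simp [hfac, e1, e2]
    have hagree1 : ∀ k, k ≠ i → k ≠ j → P' k = P k ∧ δ k = δ k :=
      fun k h1 h2 => ⟨hP'k k h1 h2, rfl⟩
    have hagree2 : ∀ k, k ≠ i → k ≠ j → P' k = P k ∧ σ δ k = δ k :=
      fun k h1 h2 => ⟨hP'k k h1 h2, hσk δ k h1 h2⟩
    have hagree3 : ∀ k, k ≠ i → k ≠ j → P k = P k ∧ σ δ k = δ k :=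
      fun k h1 h2 => ⟨rfl, hσk δ k h1 h2⟩
    set A : M := (((List.finRange (K-1)).take (i:ℕ)).map (fac P δ)).prod with hA
    set B : M := (((List.finRange (K-1)).drop ((i:ℕ)+2)).map (fac P δ)).prod with hB
    have e1 : G P' δ = H * (A * (fac P' δ i * (fac P' δ j * B))) := by
      rw [hG]
      simp only
      rw [prod_split (fac P' δ) i hlt, hjeq, htakeEq P' P δ δ hagree1,
        hdropEq P' P δ δ hagree1]
    have e2 : G P' (σ δ) = H * (A * (fac P' (σ δ) i * (fac P' (σ δ) j * B))) := by
      rw [hG]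
      simp only
      rw [prod_split (fac P' (σ δ)) i hlt, hjeq, htakeEq P' P (σ δ) δ hagree2,
        hdropEq P' P (σ δ) δ hagree2]
    have e3 : G P δ = H * (A * (fac P δ i * (fac P δ j * B))) := by
      rw [hG]
      simp only
      rw [prod_split (fac P δ) i hlt, hjeq]
    have e4 : G P (σ δ) = H * (A * (fac P (σ δ) i * (fac P (σ δ) j * B))) := by
      rw [hG]
      simp only
      rw [prod_split (fac P (σ δ)) i hlt, hjeq, htakeEq P P (σ δ) δ hagree3,
        hdropEq P P (σ δ) δ hagree3]
    rw [e1, e2, e3, e4]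
    have f1 : fac P' δ i = if δ i then 1 - X else X := by rw [hfac]; simp only [hP'i]
    have f2 : fac P' δ j = if δ j then 1 - Y else Y := by rw [hfac]; simp only [hP'j]
    have f3 : fac P' (σ δ) i = if δ j then 1 - X else X := by
      rw [hfac]; simp only [hσi, hP'i]
    have f4 : fac P' (σ δ) j = if δ i then 1 - Y else Y := by
      rw [hfac]; simp only [hσj, hP'j]
    have g1 : fac P δ i = if δ i then 1 - P i else P i := rfl
    have g2 : fac P δ j = if δ j then 1 - P j else P j := rfl
    have g3 : fac P (σ δ) i = if δ j then 1 - P i else P i := by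
      rw [hfac]; simp only [hσi]
    have g4 : fac P (σ δ) j = if δ i then 1 - P j else P j := by
      rw [hfac]; simp only [hσj]
    rw [f1, f2, f3, f4, g1, g2, g3, g4, pair_sum, pair_sum, hprod, hsum]
  calc ∑ δ ∈ s, G P' δ
      = (2⁻¹ : ℝ) • ∑ δ ∈ s, (G P' δ + G P' (σ δ)) := by
        rw [Finset.sum_add_distrib, hresum P', ← two_smul ℝ, smul_smul]
        norm_num
    _ = (2⁻¹ : ℝ) • ∑ δ ∈ s, (G P δ + G P (σ δ)) := by
        rw [Finset.sum_congr rfl (fun δ _ => hpoint δ)]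
    _ = ∑ δ ∈ s, G P δ := by
        rw [Finset.sum_add_distrib, hresum P, ← two_smul ℝ, smul_smul]
        norm_num

theorem stmt8 (n K : ℕ) (hn : 1 ≤ n) (hK : 3 ≤ K)
    (r : Fin (K-1) → ℕ) (hr : ∀ p, r p ≤ n)
    (i : Fin (K-1)) (hi : (i : ℕ) + 1 < K - 1) :
    (1 ≤ r i → r ⟨(i : ℕ) + 1, hi⟩ + 1 ≤ n → r i ≤ r ⟨(i : ℕ) + 1, hi⟩ + 1 →
      SOCK n K (Function.update (Function.update r i (r i - 1))
          ⟨(i : ℕ) + 1, hi⟩ (r ⟨(i : ℕ) + 1, hi⟩ + 1)) ⊆ SOCK n K r) ∧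
    (1 ≤ r ⟨(i : ℕ) + 1, hi⟩ → r i + 1 ≤ n → r ⟨(i : ℕ) + 1, hi⟩ ≤ r i + 1 →
      SOCK n K (Function.update (Function.update r i (r i + 1))
          ⟨(i : ℕ) + 1, hi⟩ (r ⟨(i : ℕ) + 1, hi⟩ - 1)) ⊆ SOCK n K r) := by
  set j : Fin (K-1) := ⟨(i : ℕ) + 1, hi⟩ with hj
  have hij : (i:ℕ) + 1 = (j:ℕ) := rfl
  have hne : i ≠ j := by
    intro h; rw [h] at hij; omega
  constructor
  · intro h1 h2 h3 A hA
    obtain ⟨P, H, hPr, hH, hdet, hAeq⟩ := hA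
    have hri : (P i).rank = r i - 1 := by
      have := (hPr i).2
      rwa [Function.update_of_ne hne, Function.update_self] at this
    have hrj : (P j).rank = r j + 1 := by
      have := (hPr j).2
      rwa [Function.update_self] at this
    have hlt : (P i).rank < (P j).rank := by rw [hri, hrj]; omega
    obtain ⟨P₂, Q₂, hP₂, hQ₂, hrP₂, hrQ₂, hprod, hprod2, hsum⟩ :=
      transfer (P i) (P j) (hPr i).1 (hPr j).1 hlt
    refine ⟨Function.update (Function.update P i P₂) j Q₂, H, ?_, hH, hdet, ?_⟩
    · intro k
      by_cases hk : k = j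
      · subst hk
        rw [Function.update_self]
        exact ⟨hQ₂, by rw [hrj] at hrQ₂; omega⟩
      by_cases hk' : k = i
      · subst hk'
        rw [Function.update_of_ne hne, Function.update_self]
        exact ⟨hP₂, by rw [hri] at hrP₂; omega⟩
      · rw [Function.update_of_ne hk, Function.update_of_ne hk']
        refine ⟨(hPr k).1, ?_⟩
        have := (hPr k).2
        rwa [Function.update_of_ne hk, Function.update_of_ne hk'] at this
    · rw [hAeq]
      exact (Aker_update K P H i j hij P₂ Q₂ hprod hsum).symm
  · intro h1 h2 h3 A hA
    obtain ⟨P, H, hPr, hH, hdet, hAeq⟩ := hA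
    have hri : (P i).rank = r i + 1 := by
      have := (hPr i).2
      rwa [Function.update_of_ne hne, Function.update_self] at this
    have hrj : (P j).rank = r j - 1 := by
      have := (hPr j).2
      rwa [Function.update_self] at this
    have hlt : (P j).rank < (P i).rank := by rw [hri, hrj]; omega
    obtain ⟨P₂, Q₂, hP₂, hQ₂, hrP₂, hrQ₂, hprod, hprod2, hsum⟩ :=
      transfer (P j) (P i) (hPr j).1 (hPr i).1 hlt
    refine ⟨Function.update (Function.update P i Q₂) j P₂, H, ?_, hH, hdet, ?_⟩
    · intro k
      by_cases hk : k = j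
      · subst hk
        rw [Function.update_self]
        exact ⟨hP₂, by rw [hrj] at hrP₂; omega⟩
      by_cases hk' : k = i
      · subst hk'
        rw [Function.update_of_ne hne, Function.update_self]
        exact ⟨hQ₂, by rw [hri] at hrQ₂; omega⟩
      · rw [Function.update_of_ne hk, Function.update_of_ne hk']
        refine ⟨(hPr k).1, ?_⟩
        have := (hPr k).2
        rwa [Function.update_of_ne hk, Function.update_of_ne hk'] at this
    · rw [hAeq]
      have hsum' : Q₂ + P₂ = P i + P j := by
        rw [add_comm Q₂ P₂, hsum, add_comm]
      exact (Aker_update K P H i j hij Q₂ P₂ hprod2 hsum').symm
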